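/- (Uniform boundedness principle.) Let Y be equipped with a norm ‖·‖ such that Y₊ is normal with constant C > 0, and let Z ⊆ Y₊ be a cone that is a complete metric space in the metric induced by the norm of Y, such that |φ − ψ| ∈ Z for all φ, ψ ∈ Z and ‖φ‖ = ‖|φ|‖ for all φ ∈ Z − Z. Let 𝒜 be a set of subadditive and monotone mappings A : Z − Z → Y such that AZ ⊆ Z and such that each A ∈ 𝒜 is positively homogeneous on Z and continuous on Z. If for each φ ∈ Z there exists M_φ > 0 such that ‖Aφ‖ ≤ M_φ for all A ∈ 𝒜, then there exists M > 0 such that ‖A‖_LIP ≤ M for all A ∈ 𝒜. -/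

import Mathlib

/-- Uniform boundedness principle: Let `Y ⊆ Ω → ℝ` be a linear subspace equipped
with a norm `nrm` whose positive cone is normal with constant `C > 0`, and let `Z ⊆ Y₊` be a cone
which is complete in the metric induced by the norm, with `|φ - ψ| ∈ Z` for `φ, ψ ∈ Z` and
`‖φ‖ = ‖|φ|‖` for `φ ∈ Z - Z`.  Let `𝒜` be a set of subadditive, monotone mappings
`A : Z - Z → Y` with `AZ ⊆ Z`, each positively homogeneous and continuous on `Z`.  If for each
`φ ∈ Z` there is `M_φ > 0` with `‖Aφ‖ ≤ M_φ` for all `A ∈ 𝒜`, then there is `M > 0` with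
`‖A‖_LIP ≤ M` for all `A ∈ 𝒜`, i.e. `‖Aφ - Aψ‖ ≤ M * ‖φ - ψ‖` for all `φ, ψ ∈ Z`, `A ∈ 𝒜`. -/
theorem uniform_boundedness_principle
    {Ω : Type*} [Nonempty Ω]
    (Y : Submodule ℝ (Ω → ℝ))
    -- the norm on `Y`
    (nrm : (Ω → ℝ) → ℝ)
    (hnrm_nonneg : ∀ φ ∈ Y, 0 ≤ nrm φ)
    (hnrm_zero : ∀ φ ∈ Y, (nrm φ = 0 ↔ φ = 0))
    (hnrm_add : ∀ φ ∈ Y, ∀ ψ ∈ Y, nrm (φ + ψ) ≤ nrm φ + nrm ψ)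
    (hnrm_smul : ∀ (c : ℝ), ∀ φ ∈ Y, nrm (c • φ) = |c| * nrm φ)
    -- `Y₊` is normal with constant `C > 0`
    (C : ℝ) (hC : 0 < C)
    (hnormal : ∀ φ ∈ Y, ∀ ψ ∈ Y, 0 ≤ φ → φ ≤ ψ → nrm φ ≤ C * nrm ψ)
    -- `Z ⊆ Y₊` is a cone
    (Z : Set (Ω → ℝ))
    (hZY : ∀ φ ∈ Z, φ ∈ Y ∧ 0 ≤ φ)
    (hZadd : ∀ φ ∈ Z, ∀ ψ ∈ Z, φ + ψ ∈ Z)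
    (hZsmul : ∀ t : ℝ, 0 ≤ t → ∀ φ ∈ Z, t • φ ∈ Z)
    (hZabs : ∀ φ ∈ Z, ∀ ψ ∈ Z, |φ - ψ| ∈ Z)
    -- `‖φ‖ = ‖|φ|‖` for all `φ ∈ Z - Z`
    (hZnrmabs : ∀ χ, (∃ φ ∈ Z, ∃ ψ ∈ Z, χ = φ - ψ) → nrm χ = nrm |χ|)
    -- `Z` is a complete metric space in the metric induced by the norm of `Y`
    (hZcomplete : ∀ u : ℕ → (Ω → ℝ), (∀ n, u n ∈ Z) →
      (∀ ε : ℝ, 0 < ε → ∃ N : ℕ, ∀ m ≥ N, ∀ n ≥ N, nrm (u m - u n) < ε) →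
      ∃ φ ∈ Z, ∀ ε : ℝ, 0 < ε → ∃ N : ℕ, ∀ n ≥ N, nrm (u n - φ) < ε)
    -- `𝒜` is a set of mappings `A : Z - Z → Y`, each subadditive, monotone, with `AZ ⊆ Z`,
    -- positively homogeneous on `Z` and continuous on `Z`
    (𝒜 : Set ((Ω → ℝ) → (Ω → ℝ)))
    (hAY : ∀ A ∈ 𝒜, ∀ χ, (∃ φ ∈ Z, ∃ ψ ∈ Z, χ = φ - ψ) → A χ ∈ Y)
    (hsub : ∀ A ∈ 𝒜, ∀ χ₁ χ₂, (∃ φ ∈ Z, ∃ ψ ∈ Z, χ₁ = φ - ψ) →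
      (∃ φ ∈ Z, ∃ ψ ∈ Z, χ₂ = φ - ψ) → A (χ₁ + χ₂) ≤ A χ₁ + A χ₂)
    (hmono : ∀ A ∈ 𝒜, ∀ χ₁ χ₂, (∃ φ ∈ Z, ∃ ψ ∈ Z, χ₁ = φ - ψ) →
      (∃ φ ∈ Z, ∃ ψ ∈ Z, χ₂ = φ - ψ) → χ₁ ≤ χ₂ → A χ₁ ≤ A χ₂)
    (hAZ : ∀ A ∈ 𝒜, ∀ φ ∈ Z, A φ ∈ Z)
    (hhom : ∀ A ∈ 𝒜, ∀ t : ℝ, 0 ≤ t → ∀ φ ∈ Z, A (t • φ) = t • A φ)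
    (hcont : ∀ A ∈ 𝒜, ∀ φ ∈ Z, ∀ ε : ℝ, 0 < ε → ∃ δ : ℝ, 0 < δ ∧
      ∀ ψ ∈ Z, nrm (ψ - φ) < δ → nrm (A ψ - A φ) < ε)
    -- pointwise boundedness of `𝒜`
    (hptwise : ∀ φ ∈ Z, ∃ Mφ : ℝ, 0 < Mφ ∧ ∀ A ∈ 𝒜, nrm (A φ) ≤ Mφ) :
    ∃ M : ℝ, 0 < M ∧ ∀ A ∈ 𝒜, ∀ φ ∈ Z, ∀ ψ ∈ Z, nrm (A φ - A ψ) ≤ M * nrm (φ - ψ) := by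
  classical
  by_cases hZne : ∃ φ₀, φ₀ ∈ Z
  case neg =>
    exact ⟨1, one_pos, fun A _ φ hφ => absurd ⟨φ, hφ⟩ hZne⟩
  obtain ⟨φs, hφs⟩ := hZne
  have h0Z : (0 : Ω → ℝ) ∈ Z := by
    have := hZsmul 0 le_rfl φs hφs
    simpa using this
  have hnrm0 : nrm 0 = 0 := (hnrm_zero 0 Y.zero_mem).mpr rfl
  have hYZ : ∀ φ ∈ Z, φ ∈ Y := fun φ h => (hZY φ h).1
  have hmemZZ : ∀ φ ∈ Z, (∃ a ∈ Z, ∃ b ∈ Z, φ = a - b) :=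
    fun φ h => ⟨φ, h, 0, h0Z, by simp⟩
  have hnegnrm : ∀ a ∈ Y, nrm (-a) = nrm a := by
    intro a ha
    have := hnrm_smul (-1) a ha
    simpa using this
  have tri : ∀ a b c : Ω → ℝ, a ∈ Y → b ∈ Y → c ∈ Y →
      nrm (a - c) ≤ nrm (a - b) + nrm (b - c) := by
    intro a b c ha hb hc
    have := hnrm_add (a - b) (Y.sub_mem ha hb) (b - c) (Y.sub_mem hb hc)
    simpa [sub_add_sub_cancel] using this
  -- Baire category: some ball in Z is uniformly bounded
  have hball : ∃ n : ℕ, ∃ φ₀ ∈ Z, ∃ r : ℝ, 0 < r ∧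
      ∀ ψ ∈ Z, nrm (ψ - φ₀) ≤ r → ∀ A ∈ 𝒜, nrm (A ψ) ≤ (n : ℝ) := by
    by_contra hcon
    push_neg at hcon
    -- one step of the nested-ball construction
    have step : ∀ n : ℕ, ∀ φ : Ω → ℝ, ∀ r : ℝ, ∃ ψ : Ω → ℝ, ∃ r' : ℝ,
        φ ∈ Z → 0 < r → ψ ∈ Z ∧ 0 < r' ∧ r' ≤ r / 2 ∧
          (∀ χ ∈ Z, nrm (χ - ψ) ≤ r' → nrm (χ - φ) ≤ r) ∧
          ∃ A ∈ 𝒜, ∀ χ ∈ Z, nrm (χ - ψ) ≤ r' → (n : ℝ) < nrm (A χ) := by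
      intro n φ r
      by_cases h : φ ∈ Z ∧ 0 < r
      · obtain ⟨hφ, hr⟩ := h
        obtain ⟨ψ, hψ, hd, A, hA, hgt⟩ := hcon n φ hφ (r / 2) (by linarith)
        have hε : 0 < nrm (A ψ) - n := by linarith
        obtain ⟨δ, hδ, hδprop⟩ := hcont A hA ψ hψ _ hε
        refine ⟨ψ, min (r / 2) (δ / 2), fun _ _ => ⟨hψ, by positivity,
          min_le_left _ _, ?_, A, hA, ?_⟩⟩
        · intro χ hχ hle
          have t1 := tri χ ψ φ (hYZ χ hχ) (hYZ ψ hψ) (hYZ φ hφ)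
          have : nrm (χ - ψ) ≤ r / 2 := le_trans hle (min_le_left _ _)
          linarith
        · intro χ hχ hle
          have hlt : nrm (χ - ψ) < δ := lt_of_le_of_lt
            (le_trans hle (min_le_right _ _)) (by linarith)
          have h2 := hδprop χ hχ hlt
          have hAχY : A χ ∈ Y := hYZ _ (hAZ A hA χ hχ)
          have hAψY : A ψ ∈ Y := hYZ _ (hAZ A hA ψ hψ)
          have t1 := tri (A ψ) (A χ) 0 hAψY hAχY Y.zero_mem
          rw [sub_zero, sub_zero] at t1
          have : nrm (A ψ - A χ) = nrm (A χ - A ψ) := by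
            rw [← hnegnrm (A χ - A ψ) (Y.sub_mem hAχY hAψY), neg_sub]
          linarith
      · exact ⟨0, 0, fun h1 h2 => absurd ⟨h1, h2⟩ h⟩
    choose f g hfg using step
    obtain ⟨seq, hseq0, hseqS⟩ : ∃ seq : ℕ → (Ω → ℝ) × ℝ, seq 0 = (φs, 1) ∧
        ∀ n, seq (n + 1) = (f n (seq n).1 (seq n).2, g n (seq n).1 (seq n).2) :=
      ⟨fun n => Nat.rec (φs, 1) (fun n p => (f n p.1 p.2, g n p.1 p.2)) n,
        rfl, fun n => rfl⟩
    have inv : ∀ n, (seq n).1 ∈ Z ∧ 0 < (seq n).2 := by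
      intro n
      induction n with
      | zero => rw [hseq0]; exact ⟨hφs, one_pos⟩
      | succ n ih =>
        have h := hfg n (seq n).1 (seq n).2 ih.1 ih.2
        rw [hseqS n]
        exact ⟨h.1, h.2.1⟩
    have hstep : ∀ n, (seq (n+1)).2 ≤ (seq n).2 / 2 ∧
        (∀ χ ∈ Z, nrm (χ - (seq (n+1)).1) ≤ (seq (n+1)).2 →
          nrm (χ - (seq n).1) ≤ (seq n).2) ∧
        ∃ A ∈ 𝒜, ∀ χ ∈ Z, nrm (χ - (seq (n+1)).1) ≤ (seq (n+1)).2 →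
          (n : ℝ) < nrm (A χ) := by
      intro n
      have h := hfg n (seq n).1 (seq n).2 (inv n).1 (inv n).2
      rw [hseqS n]
      exact ⟨h.2.2.1, h.2.2.2.1, h.2.2.2.2⟩
    have selfball : ∀ n, nrm ((seq n).1 - (seq n).1) ≤ (seq n).2 := by
      intro n
      simpa [hnrm0] using (inv n).2.le
    have nest : ∀ n m, n ≤ m → ∀ χ ∈ Z, nrm (χ - (seq m).1) ≤ (seq m).2 →
        nrm (χ - (seq n).1) ≤ (seq n).2 := by
      intro n m h
      induction m, h using Nat.le_induction with
      | base => exact fun χ _ h => h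
      | succ m hm ih =>
        intro χ hχ hle
        exact ih χ hχ ((hstep m).2.1 χ hχ hle)
    have hdist : ∀ n m, n ≤ m → nrm ((seq m).1 - (seq n).1) ≤ (seq n).2 :=
      fun n m h => nest n m h _ (inv m).1 (selfball m)
    have rbound : ∀ n, (seq n).2 ≤ (1 / 2 : ℝ) ^ n := by
      intro n
      induction n with
      | zero => rw [hseq0]; norm_num
      | succ n ih =>
        have := (hstep n).1
        calc (seq (n+1)).2 ≤ (seq n).2 / 2 := this
          _ ≤ (1/2:ℝ)^n / 2 := by linarith
          _ = (1/2:ℝ)^(n+1) := by ring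
    have hcauchy : ∀ ε : ℝ, 0 < ε → ∃ N : ℕ, ∀ m ≥ N, ∀ n ≥ N,
        nrm ((seq m).1 - (seq n).1) < ε := by
      intro ε hε
      obtain ⟨N, hN⟩ := exists_pow_lt_of_lt_one (show (0:ℝ) < ε / 4 by linarith)
        (show (1/2:ℝ) < 1 by norm_num)
      refine ⟨N, fun m hm n hn => ?_⟩
      have t1 := tri ((seq m).1) ((seq N).1) ((seq n).1)
        (hYZ _ (inv m).1) (hYZ _ (inv N).1) (hYZ _ (inv n).1)
      have h1 : nrm ((seq m).1 - (seq N).1) ≤ (seq N).2 := hdist N m hm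
      have h2 : nrm ((seq N).1 - (seq n).1) ≤ (seq N).2 := by
        have := hdist N n hn
        have e : nrm ((seq N).1 - (seq n).1) = nrm ((seq n).1 - (seq N).1) := by
          rw [← hnegnrm ((seq n).1 - (seq N).1)
            (Y.sub_mem (hYZ _ (inv n).1) (hYZ _ (inv N).1)), neg_sub]
        linarith
      have h3 : (seq N).2 ≤ (1/2:ℝ)^N := rbound N
      linarith
    obtain ⟨φ, hφZ, hconv⟩ := hZcomplete (fun n => (seq n).1) (fun n => (inv n).1) hcauchy
    have hlim : ∀ n, nrm (φ - (seq n).1) ≤ (seq n).2 := by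
      intro n
      refine le_of_forall_pos_le_add ?_
      intro ε hε
      obtain ⟨N, hN⟩ := hconv ε hε
      set m := max N n with hm
      have h1 : nrm ((seq m).1 - φ) < ε := hN m (le_max_left _ _)
      have h2 : nrm ((seq m).1 - (seq n).1) ≤ (seq n).2 := hdist n m (le_max_right _ _)
      have t1 := tri φ ((seq m).1) ((seq n).1) (hYZ _ hφZ) (hYZ _ (inv m).1)
        (hYZ _ (inv n).1)
      have e : nrm (φ - (seq m).1) = nrm ((seq m).1 - φ) := by
        rw [← hnegnrm ((seq m).1 - φ) (Y.sub_mem (hYZ _ (inv m).1) (hYZ _ hφZ)), neg_sub]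
      linarith
    obtain ⟨Mφ, hMφ, hMbd⟩ := hptwise φ hφZ
    obtain ⟨n, hn⟩ := exists_nat_gt Mφ
    obtain ⟨A, hA, hgt⟩ := (hstep n).2.2
    have := hgt φ hφZ (hlim (n+1))
    have := hMbd A hA
    linarith
  obtain ⟨n0, φ₀, hφ₀, r, hr, hbd⟩ := hball
  set K : ℝ := 2 * C * (n0 + 1) / r with hK
  have hKpos : 0 < K := by positivity
  -- uniform operator bound on Z
  have hbd' : ∀ A ∈ 𝒜, ∀ χ ∈ Z, nrm (A χ) ≤ K * nrm χ := by
    intro A hA χ hχ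
    rcases eq_or_lt_of_le (hnrm_nonneg χ (hYZ χ hχ)) with h0 | h0
    · have hχ0 : χ = 0 := (hnrm_zero χ (hYZ χ hχ)).mp h0.symm
      have hA0 : A χ = 0 := by
        have := hhom A hA 0 le_rfl 0 h0Z
        simpa [hχ0] using this
      rw [hA0, hnrm0, ← h0]
      simp
    · set t : ℝ := r / (2 * nrm χ) with ht
      have htpos : 0 < t := by positivity
      have htχZ : t • χ ∈ Z := hZsmul t htpos.le χ hχ
      have hψ₀Z : φ₀ + t • χ ∈ Z := hZadd φ₀ hφ₀ _ htχZ
      have hdist : nrm (φ₀ + t • χ - φ₀) ≤ r := by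
        have e : φ₀ + t • χ - φ₀ = t • χ := by ring
        rw [e, hnrm_smul t χ (hYZ χ hχ), abs_of_pos htpos, ht]
        rw [div_mul_eq_mul_div, mul_comm]
        rw [div_le_iff₀ (by positivity)]
        nlinarith [hnrm_nonneg χ (hYZ χ hχ)]
      have hn0 : nrm (A (φ₀ + t • χ)) ≤ (n0 : ℝ) := hbd _ hψ₀Z hdist A hA
      have hle : t • χ ≤ φ₀ + t • χ := by
        intro ω
        have h := (hZY φ₀ hφ₀).2 ω
        simp only [Pi.zero_apply] at h
        simp only [Pi.add_apply]
        linarith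
      have hmle : A (t • χ) ≤ A (φ₀ + t • χ) :=
        hmono A hA _ _ (hmemZZ _ htχZ) (hmemZZ _ hψ₀Z) hle
      have hpos : (0 : Ω → ℝ) ≤ A (t • χ) := (hZY _ (hAZ A hA _ htχZ)).2
      have hnormal' : nrm (A (t • χ)) ≤ C * nrm (A (φ₀ + t • χ)) :=
        hnormal _ (hYZ _ (hAZ A hA _ htχZ)) _ (hYZ _ (hAZ A hA _ hψ₀Z)) hpos hmle
      have hhom' : A (t • χ) = t • A χ := hhom A hA t htpos.le χ hχ
      have hAχY : A χ ∈ Y := hAY A hA χ (hmemZZ χ hχ)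
      have e2 : nrm (A (t • χ)) = t * nrm (A χ) := by
        rw [hhom', hnrm_smul t _ hAχY, abs_of_pos htpos]
      have h1 : t * nrm (A χ) ≤ C * n0 := by
        rw [← e2]
        calc nrm (A (t • χ)) ≤ C * nrm (A (φ₀ + t • χ)) := hnormal'
          _ ≤ C * n0 := mul_le_mul_of_nonneg_left hn0 hC.le
      have key : t * (K * nrm χ) = C * (n0 + 1) := by
        rw [ht, hK]
        field_simp
      have h2 : C * (n0 : ℝ) ≤ C * (n0 + 1) := by nlinarith
      have h3 : t * nrm (A χ) ≤ t * (K * nrm χ) := by linarith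
      exact le_of_mul_le_mul_left h3 htpos
  refine ⟨C * K, by positivity, fun A hA φ hφ ψ hψ => ?_⟩
  have hAφZ : A φ ∈ Z := hAZ A hA φ hφ
  have hAψZ : A ψ ∈ Z := hAZ A hA ψ hψ
  have habsZ : |φ - ψ| ∈ Z := hZabs φ hφ ψ hψ
  have hAabsZ : A |φ - ψ| ∈ Z := hAZ A hA _ habsZ
  have h1 : A φ ≤ A ψ + A |φ - ψ| := by
    have hle : φ ≤ ψ + |φ - ψ| := by
      intro ω
      simp only [Pi.add_apply, Pi.abs_apply, Pi.sub_apply]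
      have := le_abs_self (φ ω - ψ ω)
      linarith
    calc A φ ≤ A (ψ + |φ - ψ|) :=
          hmono A hA _ _ (hmemZZ φ hφ) (hmemZZ _ (hZadd ψ hψ _ habsZ)) hle
      _ ≤ A ψ + A |φ - ψ| := hsub A hA ψ |φ - ψ| (hmemZZ ψ hψ) (hmemZZ _ habsZ)
  have h2 : A ψ ≤ A φ + A |φ - ψ| := by
    have hle : ψ ≤ φ + |φ - ψ| := by
      intro ω
      simp only [Pi.add_apply, Pi.abs_apply, Pi.sub_apply]
      have := neg_abs_le (φ ω - ψ ω)
      linarith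
    calc A ψ ≤ A (φ + |φ - ψ|) :=
          hmono A hA _ _ (hmemZZ ψ hψ) (hmemZZ _ (hZadd φ hφ _ habsZ)) hle
      _ ≤ A φ + A |φ - ψ| := hsub A hA φ |φ - ψ| (hmemZZ φ hφ) (hmemZZ _ habsZ)
  have habs : |A φ - A ψ| ≤ A |φ - ψ| := by
    intro ω
    have h1' := h1 ω
    have h2' := h2 ω
    simp only [Pi.add_apply] at h1' h2'
    simp only [Pi.abs_apply, Pi.sub_apply]
    rw [abs_le]
    constructor <;> linarith
  have habspos : (0 : Ω → ℝ) ≤ |A φ - A ψ| := by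
    intro ω
    simp only [Pi.abs_apply, Pi.zero_apply]
    exact abs_nonneg _
  have hAabsmemZ : |A φ - A ψ| ∈ Z := hZabs _ hAφZ _ hAψZ
  calc nrm (A φ - A ψ) = nrm |A φ - A ψ| :=
        hZnrmabs _ ⟨A φ, hAφZ, A ψ, hAψZ, rfl⟩
    _ ≤ C * nrm (A |φ - ψ|) :=
        hnormal _ (hYZ _ hAabsmemZ) _ (hYZ _ hAabsZ) habspos habs
    _ ≤ C * (K * nrm |φ - ψ|) :=
        mul_le_mul_of_nonneg_left (hbd' A hA _ habsZ) hC.le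
    _ = C * K * nrm (φ - ψ) := by
        rw [← hZnrmabs (φ - ψ) ⟨φ, hφ, ψ, hψ, rfl⟩]
        ring
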